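/- Let R be a (not necessarily commutative) unital ring and let g, L ∈ R be such that 1 + L and 1 + gLg are units of R. Set K := L(1 + L)⁻¹. Then 1 + (g² − 1)K is a unit of R and gLg(1 + gLg)⁻¹ = gK(1 + (g² − 1)K)⁻¹g. -/

import Mathlib

/-- In a unital ring, if `1 + L` and `1 + gLg` are units and `K = L(1+L)⁻¹`, then
`1 + (g² - 1)K` is a unit and `gLg(1+gLg)⁻¹ = gK(1+(g²-1)K)⁻¹g`. -/
theorem balanced_rigidity_stmt6
    {R : Type*} [Ring R] (g L : R)
    (hL : IsUnit (1 + L)) (hgLg : IsUnit (1 + g * L * g)) :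
    IsUnit (1 + (g ^ 2 - 1) * (L * Ring.inverse (1 + L))) ∧
    g * L * g * Ring.inverse (1 + g * L * g)
      = g * (L * Ring.inverse (1 + L))
          * Ring.inverse (1 + (g ^ 2 - 1) * (L * Ring.inverse (1 + L))) * g := by
  set a := Ring.inverse (1 + L) with ha
  set c := Ring.inverse (1 + g * L * g) with hc
  have ha1 : (1 + L) * a = 1 := Ring.mul_inverse_cancel _ hL
  have ha2 : a * (1 + L) = 1 := Ring.inverse_mul_cancel _ hL
  have hc1 : (1 + g * L * g) * c = 1 := Ring.mul_inverse_cancel _ hgLg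
  have hc2 : c * (1 + g * L * g) = 1 := Ring.inverse_mul_cancel _ hgLg
  -- 1 + g²L is a unit
  have e1 : (1 + g ^ 2 * L) * (1 - g * (c * (g * L))) = 1 := by
    have h : (1 + g ^ 2 * L) * (1 - g * (c * (g * L)))
        = 1 + g ^ 2 * L - g * (((1 + g * L * g) * c) * (g * L)) := by noncomm_ring
    rw [h, hc1]; noncomm_ring
  have e2 : (1 - g * (c * (g * L))) * (1 + g ^ 2 * L) = 1 := by
    have h : (1 - g * (c * (g * L))) * (1 + g ^ 2 * L)
        = 1 + g ^ 2 * L - g * ((c * (1 + g * L * g)) * (g * L)) := by noncomm_ring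
    rw [h, hc2]; noncomm_ring
  have hb : IsUnit (1 + g ^ 2 * L) := ⟨⟨_, _, e1, e2⟩, rfl⟩
  set d := Ring.inverse (1 + g ^ 2 * L) with hd
  have hd1 : (1 + g ^ 2 * L) * d = 1 := Ring.mul_inverse_cancel _ hb
  have hd2 : d * (1 + g ^ 2 * L) = 1 := Ring.inverse_mul_cancel _ hb
  have hX : (1 : R) + (g ^ 2 - 1) * (L * a) = (1 + g ^ 2 * L) * a := by
    have h : (1 + g ^ 2 * L) * a = (1 + L) * a + (g ^ 2 - 1) * (L * a) := by noncomm_ring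
    rw [h, ha1]
  have hXu : IsUnit (1 + (g ^ 2 - 1) * (L * a)) := by
    rw [hX]; exact hb.mul hL.ringInverse
  refine ⟨hXu, ?_⟩
  have hXinv : Ring.inverse (1 + (g ^ 2 - 1) * (L * a)) = (1 + L) * d := by
    have h1 : (1 + (g ^ 2 - 1) * (L * a)) * ((1 + L) * d) = 1 := by
      rw [hX, mul_assoc, ← mul_assoc a, ha2, one_mul, hd1]
    calc Ring.inverse (1 + (g ^ 2 - 1) * (L * a))
        = Ring.inverse (1 + (g ^ 2 - 1) * (L * a))
            * ((1 + (g ^ 2 - 1) * (L * a)) * ((1 + L) * d)) := by rw [h1, mul_one]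
      _ = (1 + L) * d := by
          rw [← mul_assoc, Ring.inverse_mul_cancel _ hXu, one_mul]
  have hcomm : g * c = d * g := by
    have h0 : (1 + g ^ 2 * L) * g = g * (1 + g * L * g) := by noncomm_ring
    calc g * c = d * ((1 + g ^ 2 * L) * g) * c := by rw [← mul_assoc, hd2, one_mul]
      _ = d * g * ((1 + g * L * g) * c) := by rw [h0]; noncomm_ring
      _ = d * g := by rw [hc1, mul_one]
  rw [hXinv]
  calc g * L * g * c = g * L * (d * g) := by rw [← hcomm]; noncomm_ring
    _ = g * (L * a) * ((1 + L) * d) * g := by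
        have h' : g * (L * a) * ((1 + L) * d) * g
            = g * (L * (a * (1 + L))) * (d * g) := by noncomm_ring
        rw [h', ha2, mul_one]
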